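/- Every graph in d-DIR (the intersection graph of a finite family of line segments in the plane using at most d distinct slopes) satisfies χ(G) ≤ d·ω(G). -/

import Mathlib

/-- The slope of the segment with endpoints `P` and `Q` (`none` codes `∞`). -/
noncomputable def segSlope (P Q : ℝ × ℝ) : Option ℝ :=
  if P.1 = Q.1 then none else some ((Q.2 - P.2) / (Q.1 - P.1))

noncomputable def segLine (P Q : ℝ × ℝ) : ℝ :=
  if P.1 = Q.1 then P.1 else P.2 - ((Q.2 - P.2) / (Q.1 - P.1)) * P.1

noncomputable def segLeft (P Q : ℝ × ℝ) : ℝ :=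
  if P.1 = Q.1 then min P.2 Q.2 else min P.1 Q.1

noncomputable def segRight (P Q : ℝ × ℝ) : ℝ :=
  if P.1 = Q.1 then max P.2 Q.2 else max P.1 Q.1

lemma segLeft_le_segRight (P Q : ℝ × ℝ) : segLeft P Q ≤ segRight P Q := by
  unfold segLeft segRight
  split <;> exact min_le_max

lemma mem_segment_prod {P Q z : ℝ × ℝ} :
    z ∈ segment ℝ P Q ↔ ∃ a b : ℝ, 0 ≤ a ∧ 0 ≤ b ∧ a + b = 1 ∧
      a * P.1 + b * Q.1 = z.1 ∧ a * P.2 + b * Q.2 = z.2 := by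
  constructor
  · rintro ⟨a, b, ha, hb, hab, rfl⟩
    exact ⟨a, b, ha, hb, hab, rfl, rfl⟩
  · rintro ⟨a, b, ha, hb, hab, h1, h2⟩
    exact ⟨a, b, ha, hb, hab, by ext <;> simpa⟩

lemma mem_uIcc_segment {a b x : ℝ} : x ∈ Set.uIcc a b ↔ x ∈ segment ℝ a b := by
  rw [segment_eq_uIcc]

lemma seg_vertical {P Q : ℝ × ℝ} (h : P.1 = Q.1) :
    segment ℝ P Q = {z | z.1 = P.1 ∧ z.2 ∈ Set.uIcc P.2 Q.2} := by
  ext z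
  rw [Set.mem_setOf_eq, mem_uIcc_segment, mem_segment_prod]
  constructor
  · rintro ⟨a, b, ha, hb, hab, h1, h2⟩
    have e1 : a * P.1 + b * P.1 = P.1 := by rw [← add_mul, hab, one_mul]
    refine ⟨by rw [← h1, ← h, e1], ⟨a, b, ha, hb, hab, by simpa using h2⟩⟩
  · rintro ⟨hz1, a, b, ha, hb, hab, h2⟩
    have e1 : a * P.1 + b * P.1 = P.1 := by rw [← add_mul, hab, one_mul]
    exact ⟨a, b, ha, hb, hab, by rw [hz1, ← h]; exact e1, by simpa using h2⟩

lemma seg_nonvertical {P Q : ℝ × ℝ} (h : P.1 ≠ Q.1) :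
    segment ℝ P Q = {z | z.2 = ((Q.2 - P.2) / (Q.1 - P.1)) * z.1 +
      (P.2 - ((Q.2 - P.2) / (Q.1 - P.1)) * P.1) ∧ z.1 ∈ Set.uIcc P.1 Q.1} := by
  set m := (Q.2 - P.2) / (Q.1 - P.1) with hm
  have hQ1 : Q.1 - P.1 ≠ 0 := sub_ne_zero.mpr (Ne.symm h)
  have hQ2 : Q.2 = m * Q.1 + (P.2 - m * P.1) := by
    field_simp [hm]
    rw [hm]; linear_combination -(div_mul_cancel₀ (Q.2 - P.2) hQ1)
  ext z
  rw [Set.mem_setOf_eq, mem_uIcc_segment, mem_segment_prod]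
  constructor
  · rintro ⟨a, b, ha, hb, hab, h1, h2⟩
    constructor
    · rw [← h2, ← h1, hQ2]; linear_combination (P.2 - m * P.1) * hab
    · exact ⟨a, b, ha, hb, hab, by simpa using h1⟩
  · rintro ⟨hz2, a, b, ha, hb, hab, h1⟩
    refine ⟨a, b, ha, hb, hab, by simpa using h1, ?_⟩
    rw [hz2, ← (by simpa using h1 : a * P.1 + b * Q.1 = z.1), hQ2]
    linear_combination (P.2 - m * P.1) * hab

lemma uIcc_eq_Icc_min_max (a b : ℝ) : Set.uIcc a b = Set.Icc (min a b) (max a b) := rfl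

lemma seg_inter_iff {P Q P' Q' : ℝ × ℝ} (hs : segSlope P Q = segSlope P' Q') :
    (segment ℝ P Q ∩ segment ℝ P' Q').Nonempty ↔
      segLine P Q = segLine P' Q' ∧
      (Set.Icc (segLeft P Q) (segRight P Q) ∩
        Set.Icc (segLeft P' Q') (segRight P' Q')).Nonempty := by
  by_cases h : P.1 = Q.1
  · have h' : P'.1 = Q'.1 := by
      by_contra h'
      simp [segSlope, h, h'] at hs
    rw [seg_vertical h, seg_vertical h']
    simp only [segLine, segLeft, segRight, if_pos h, if_pos h', ← uIcc_eq_Icc_min_max]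
    constructor
    · rintro ⟨z, ⟨hz1, hz2⟩, ⟨hz1', hz2'⟩⟩
      exact ⟨hz1 ▸ hz1', ⟨z.2, hz2, hz2'⟩⟩
    · rintro ⟨hline, ⟨x, hx, hx'⟩⟩
      exact ⟨(P.1, x), ⟨rfl, hx⟩, ⟨hline, hx'⟩⟩
  · have h' : P'.1 ≠ Q'.1 := by
      by_contra h'
      simp [segSlope, h, h'] at hs
    have hm : (Q.2 - P.2) / (Q.1 - P.1) = (Q'.2 - P'.2) / (Q'.1 - P'.1) := by
      simpa [segSlope, h, h'] using hs
    rw [seg_nonvertical h, seg_nonvertical h']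
    simp only [segLine, segLeft, segRight, if_neg h, if_neg h', ← uIcc_eq_Icc_min_max]
    set m := (Q.2 - P.2) / (Q.1 - P.1) with hmdef
    constructor
    · rintro ⟨z, ⟨hz1, hz2⟩, ⟨hz1', hz2'⟩⟩
      rw [← hm] at hz1' ⊢
      constructor
      · have := hz1.symm.trans hz1'
        linarith [this]
      · exact ⟨z.1, hz2, hz2'⟩
    · rintro ⟨hline, ⟨x, hx, hx'⟩⟩
      rw [← hm] at hline
      refine ⟨(x, m * x + (P.2 - m * P.1)), ⟨rfl, hx⟩, ⟨?_, hx'⟩⟩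
      rw [← hm]
      simp only
      linarith [hline]


open Classical in
noncomputable def greedy (R : ℕ → ℕ → Prop) : ℕ → ℕ
  | i => sInf {c | ∀ j, (h : j < i) → R j i → greedy R j ≠ c}
  termination_by i => i

lemma greedy_mem (R : ℕ → ℕ → Prop) (i : ℕ) :
    greedy R i ∈ {c | ∀ j, j < i → R j i → greedy R j ≠ c} := by
  rw [greedy]
  apply Nat.sInf_mem
  refine ⟨1 + (Finset.range i).sup (greedy R), fun j hj _ hc => ?_⟩
  have : greedy R j ≤ (Finset.range i).sup (greedy R) :=
    Finset.le_sup (Finset.mem_range.mpr hj)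
  omega

lemma greedy_ne {R : ℕ → ℕ → Prop} {i j : ℕ} (hj : j < i) (hR : R j i) :
    greedy R j ≠ greedy R i := greedy_mem R i j hj hR

open Classical in
lemma greedy_le (R : ℕ → ℕ → Prop) (i : ℕ) :
    greedy R i ≤ ((Finset.range i).filter (fun j => R j i)).card := by
  classical
  set k := ((Finset.range i).filter (fun j => R j i)).card with hk
  set T := ((Finset.range i).filter (fun j => R j i)).image (greedy R) with hT
  have hTcard : T.card ≤ k := Finset.card_image_le
  have : ∃ c ∈ Finset.range (k+1), c ∉ T := by
    by_contra hcon
    push_neg at hcon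
    have := Finset.card_le_card (fun c hc => hcon c hc)
    simp at this; omega
  obtain ⟨c, hc1, hc2⟩ := this
  have hcS : c ∈ {c | ∀ j, j < i → R j i → greedy R j ≠ c} := by
    intro j hj hR he
    exact hc2 (Finset.mem_image.mpr ⟨j, Finset.mem_filter.mpr ⟨Finset.mem_range.mpr hj, hR⟩, he⟩)
  calc greedy R i ≤ c := by rw [greedy]; exact Nat.sInf_le hcS
    _ ≤ k := by simpa using Nat.lt_succ_iff.mp (Finset.mem_range.mp hc1)

/-- `(p, q)` is a segment representation of `G`: each vertex `v` is the segment
from `p v` to `q v`, and distinct vertices are adjacent iff their segments meet. -/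
def IsSegmentRepresentation {V : Type*} (G : SimpleGraph V) (p q : V → ℝ × ℝ) : Prop :=
  (∀ v, p v ≠ q v) ∧
    ∀ u v, G.Adj u v ↔ u ≠ v ∧ (segment ℝ (p u) (q u) ∩ segment ℝ (p v) (q v)).Nonempty

/-- every `d`-DIR graph (segment graph with at most `d` slopes)
satisfies `χ(G) ≤ d·ω(G)`. -/
theorem dDIR_chromaticNumber_le {V : Type*} [Fintype V] [DecidableEq V]
    (G : SimpleGraph V) (d : ℕ) (p q : V → ℝ × ℝ)
    (hrep : IsSegmentRepresentation G p q)
    (hslopes : (Finset.univ.image fun v => segSlope (p v) (q v)).card ≤ d) :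
    G.chromaticNumber ≤ (d * G.cliqueNum : ℕ∞) := by
  classical
  obtain ⟨hpq, hadj⟩ := hrep
  rcases isEmpty_or_nonempty V with hemp | hne
  · have h0 : G.Colorable 0 := ⟨⟨fun v => (IsEmpty.false v).elim, fun {u} _ _ => (IsEmpty.false u).elim⟩⟩
    refine le_trans h0.chromaticNumber_le ?_
    simp
  · set ω := G.cliqueNum with hωdef
    have hω : 1 ≤ ω := by
      obtain ⟨v⟩ := hne
      have hcl : G.IsClique (({v} : Finset V) : Set V) := by
        rw [Finset.coe_singleton]; exact G.isClique_singleton v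
      have h1 : ({v} : Finset V).card ≤ ω :=
        @SimpleGraph.IsClique.card_le_cliqueNum _ G _ _ hcl
      simpa using h1
    set n := Fintype.card V with hndef
    have hn : 0 < n := Fintype.card_pos
    let ι : V ≃ Fin n := Fintype.equivFin V
    let Sl : V → Option ℝ := fun v => segSlope (p v) (q v)
    let lft : V → ℝ := fun v => segLeft (p v) (q v)
    let rgt : V → ℝ := fun v => segRight (p v) (q v)
    let lin : V → ℝ := fun v => segLine (p v) (q v)
    let f : V → Lex (ℝ × Fin n) := fun v => toLex (lft v, ι v)
    have hfinj : Function.Injective f := by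
      intro u v huv
      have h2 : (ofLex (f u)).2 = (ofLex (f v)).2 := by rw [huv]
      exact ι.injective h2
    letI lo : LinearOrder V := LinearOrder.lift' f hfinj
    have hc : (Finset.univ : Finset V).card = n := Finset.card_univ
    let e := Finset.univ.orderIsoOfFin hc
    let E : Fin n → V := fun i => (e i : V)
    let idx : V → Fin n := fun v => e.symm ⟨v, Finset.mem_univ v⟩
    have hEidx : ∀ v, E (idx v) = v := fun v =>
      congrArg Subtype.val (e.apply_symm_apply ⟨v, Finset.mem_univ v⟩)
    have hidxE : ∀ i, idx (E i) = i := fun i => by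
      have : (⟨E i, Finset.mem_univ (E i)⟩ : {x // x ∈ (Finset.univ : Finset V)}) = e i :=
        Subtype.ext rfl
      simp only [idx, this, OrderIso.symm_apply_apply]
    have hmono : ∀ i j : Fin n, i ≤ j → lft (E i) ≤ lft (E j) := by
      intro i j hij
      have h3 : e i ≤ e j := e.monotone hij
      have hle : f (E i) ≤ f (E j) := h3
      rcases (Prod.Lex.le_iff).mp hle with h4 | ⟨h4, _⟩
      · exact le_of_lt h4
      · exact le_of_eq h4
    let R : ℕ → ℕ → Prop := fun a b =>
      ∃ (ha : a < n) (hb : b < n), G.Adj (E ⟨a, ha⟩) (E ⟨b, hb⟩) ∧ Sl (E ⟨a, ha⟩) = Sl (E ⟨b, hb⟩)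
    let col : V → ℕ := fun v => greedy R (idx v : ℕ)
    -- facts from adjacency with equal slopes
    have hgeo : ∀ u v : V, G.Adj u v → Sl u = Sl v →
        lin u = lin v ∧ (Set.Icc (lft u) (rgt u) ∩ Set.Icc (lft v) (rgt v)).Nonempty := by
      intro u v huv hS
      have := ((hadj u v).mp huv).2
      exact (seg_inter_iff hS).mp this
    -- the bound on col
    have hbound : ∀ v : V, col v < ω := by
      intro v
      set T : Finset V := Finset.univ.filter
        (fun u => G.Adj u v ∧ Sl u = Sl v ∧ (idx u : ℕ) < (idx v : ℕ)) with hTdef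
      have hfil : ((Finset.range (idx v : ℕ)).filter (fun j => R j (idx v : ℕ))).card ≤ T.card := by
        apply Finset.card_le_card_of_injOn (fun j => if h : j < n then E ⟨j, h⟩ else v)
        · intro j hj
          rw [Finset.mem_coe, Finset.mem_filter, Finset.mem_range] at hj
          obtain ⟨hjlt, ha, hb, hAdj, hSl⟩ := hj
          have hjn : j < n := lt_trans hjlt (idx v).isLt
          have hEv : E ⟨(idx v : ℕ), hb⟩ = v := by
            rw [show (⟨(idx v : ℕ), hb⟩ : Fin n) = idx v from Fin.ext rfl]; exact hEidx v
          simp only [dif_pos hjn]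
          rw [hTdef, Finset.mem_coe, Finset.mem_filter]
          have hEj : E ⟨j, hjn⟩ = E ⟨j, ha⟩ := rfl
          refine ⟨Finset.mem_univ _, ?_, ?_, ?_⟩
          · rw [hEj, ← hEv]; exact hAdj
          · rw [hEj, ← hEv]; exact hSl
          · rw [hidxE]; exact hjlt
        · intro a ha b hb hab
          rw [Finset.mem_coe, Finset.mem_filter, Finset.mem_range] at ha hb
          have han : a < n := lt_trans ha.1 (idx v).isLt
          have hbn : b < n := lt_trans hb.1 (idx v).isLt
          simp only [dif_pos han, dif_pos hbn] at hab
          have hE : (⟨a, han⟩ : Fin n) = ⟨b, hbn⟩ := by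
            have h7 : idx (E ⟨a, han⟩) = idx (E ⟨b, hbn⟩) := by rw [hab]
            rwa [hidxE, hidxE] at h7
          simpa using congrArg Fin.val hE
      -- insert v T is a clique
      have hkey : ∀ u ∈ T, Sl u = Sl v ∧ lin u = lin v ∧ lft v ∈ Set.Icc (lft u) (rgt u) := by
        intro u hu
        rw [hTdef, Finset.mem_filter] at hu
        obtain ⟨_, hAdj, hSl, hlt⟩ := hu
        obtain ⟨hlin, x, hx1, hx2⟩ := hgeo u v hAdj hSl
        refine ⟨hSl, hlin, ?_, ?_⟩
        · have h5 : lft (E (idx u)) ≤ lft (E (idx v)) :=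
            hmono _ _ (le_of_lt (Fin.lt_iff_val_lt_val.mpr hlt))
          rwa [hEidx u, hEidx v] at h5
        · exact le_trans hx2.1 hx1.2
      have hclique : G.IsClique (insert v T : Finset V) := by
        intro a ha b hb hab
        rw [Finset.coe_insert, Set.mem_insert_iff, Finset.mem_coe] at ha hb
        have hAdjab : ∀ x ∈ T, G.Adj x v := by
          intro x hx
          rw [hTdef, Finset.mem_filter] at hx
          exact hx.2.1
        rcases ha with rfl | ha <;> rcases hb with rfl | hb
        · exact absurd rfl hab
        · exact (hAdjab b hb).symm
        · exact hAdjab a ha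
        · obtain ⟨hSa, hla, hma⟩ := hkey a ha
          obtain ⟨hSb, hlb, hmb⟩ := hkey b hb
          refine (hadj a b).mpr ⟨hab, ?_⟩
          refine (seg_inter_iff (hSa.trans hSb.symm)).mpr ⟨hla.trans hlb.symm, ⟨lft v, hma, hmb⟩⟩
      have hvT : v ∉ T := by
        rw [hTdef, Finset.mem_filter]
        rintro ⟨-, hAdj, -⟩
        exact G.irrefl hAdj
      have hcard : (insert v T).card ≤ ω :=
        @SimpleGraph.IsClique.card_le_cliqueNum _ G _ _ hclique
      rw [Finset.card_insert_of_notMem hvT] at hcard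
      have h6 := greedy_le R (idx v : ℕ)
      rw [Finset.filter_congr_decidable] at h6
      rw [Finset.filter_congr_decidable] at hfil
      have h8 : col v ≤ T.card := le_trans h6 hfil
      omega
    -- the coloring
    set slopes := (Finset.univ.image fun v => segSlope (p v) (q v)) with hslset
    have hmem : ∀ v : V, Sl v ∈ slopes := fun v =>
      Finset.mem_image_of_mem _ (Finset.mem_univ v)
    let C : G.Coloring (↥slopes × Fin ω) := SimpleGraph.Coloring.mk
      (fun v => (⟨Sl v, hmem v⟩, ⟨col v, hbound v⟩))
      (by
        intro u v huv heq
        rw [Prod.ext_iff] at heq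
        have hS : Sl u = Sl v := congrArg Subtype.val heq.1
        have hcol : col u = col v := congrArg Fin.val heq.2
        have hne : u ≠ v := G.ne_of_adj huv
        have hidxne : (idx u : ℕ) ≠ (idx v : ℕ) := by
          intro h
          exact hne (by rw [← hEidx u, ← hEidx v, Fin.ext h])
        rcases lt_or_gt_of_ne hidxne with hlt | hlt
        · have hR : R (idx u : ℕ) (idx v : ℕ) := by
            refine ⟨(idx u).isLt, (idx v).isLt, ?_, ?_⟩
            · simp only [Fin.eta]; rw [hEidx, hEidx]; exact huv
            · simp only [Fin.eta]; rw [hEidx, hEidx]; exact hS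
          exact greedy_ne hlt hR hcol
        · have hR : R (idx v : ℕ) (idx u : ℕ) := by
            refine ⟨(idx v).isLt, (idx u).isLt, ?_, ?_⟩
            · simp only [Fin.eta]; rw [hEidx, hEidx]; exact huv.symm
            · simp only [Fin.eta]; rw [hEidx, hEidx]; exact hS.symm
          exact greedy_ne hlt hR hcol.symm)
    have hcolorable : G.Colorable (Fintype.card (↥slopes × Fin ω)) := C.colorable
    have hcardeq : Fintype.card (↥slopes × Fin ω) = slopes.card * ω := by
      rw [Fintype.card_prod, Fintype.card_coe, Fintype.card_fin]
    have hfin : G.Colorable (d * ω) := by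
      apply hcolorable.mono
      rw [hcardeq]
      exact Nat.mul_le_mul_right ω hslopes
    have := hfin.chromaticNumber_le
    rwa [Nat.cast_mul] at this
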